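/- In the setting of the flat-interpolation construction (one neuron per nonzero-label example, each active on exactly one patch), with reparameterized unit output weights $|v_i| = 1$ and pre-activation $z_i = J|y_i|$ at the anchor patch, at the interpolating parameter $\theta$ the loss Hessian equals the Gauss–Newton part: $\nabla^2_{\theta}\mathcal{L} = \frac{1}{n}\sum_{i=1}^n \nabla_{\theta} f_{\theta}(x_i) \nabla_{\theta} f_{\theta}(x_i)^{\mathsf{T}}$, and it satisfies $\lambda_{\max}(\nabla^2_{\theta}\mathcal{L}) \le 1 + \frac{D^2 + 2/J^2}{n}$. -/

import Mathlib

open scoped RealInnerProductSpace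

/-- Parameter space of a two-layer locally connected ReLU network with weight
sharing (`K` filters in `ℝ^m`, biases, output weights, output bias), with the
Euclidean (ℓ²) norm. -/
abbrev LCNParam (K m : ℕ) : Type :=
  EuclideanSpace ℝ ((Fin K × Fin m) ⊕ Fin K ⊕ Fin K ⊕ Unit)

/-- The network `f_θ(x) = ∑_k (v_k/J) ∑_j φ(w_kᵀ π_j(x) - b_k) + β`. -/
noncomputable def lcnNet {K m d J : ℕ} (π : Fin J → Fin m → Fin d)
    (θ : LCNParam K m) (x : EuclideanSpace ℝ (Fin d)) : ℝ :=
  (∑ k : Fin K, θ (Sum.inr (Sum.inr (Sum.inl k))) / (J : ℝ) *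
      ∑ j : Fin J,
        max (∑ i : Fin m, θ (Sum.inl (k, i)) * x (π j i) -
          θ (Sum.inr (Sum.inl k))) 0) +
    θ (Sum.inr (Sum.inr (Sum.inr ())))

namespace Stmt18Aux

noncomputable section

/-- Pre-activation of neuron `k` on patch `j` of input `xv`, as a CLM. -/
def preC {n m d J : ℕ} (π : Fin J → Fin m → Fin d)
    (xv : EuclideanSpace ℝ (Fin d)) (k : Fin n) (j : Fin J) :
    LCNParam n m →L[ℝ] ℝ :=
  (∑ i : Fin m, xv (π j i) • (EuclideanSpace.proj (Sum.inl (k, i)) : LCNParam n m →L[ℝ] ℝ)) -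
    EuclideanSpace.proj (Sum.inr (Sum.inl k))

lemma preC_apply {n m d J : ℕ} (π : Fin J → Fin m → Fin d)
    (xv : EuclideanSpace ℝ (Fin d)) (k : Fin n) (j : Fin J) (θ' : LCNParam n m) :
    preC π xv k j θ' =
      (∑ i : Fin m, θ' (Sum.inl (k, i)) * xv (π j i)) - θ' (Sum.inr (Sum.inl k)) := by
  simp [preC, ContinuousLinearMap.sum_apply, mul_comm]

/-- Output weight coordinate CLM. -/
def vC (n m : ℕ) (k : Fin n) : LCNParam n m →L[ℝ] ℝ :=
  EuclideanSpace.proj (Sum.inr (Sum.inr (Sum.inl k)))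

/-- Output bias coordinate CLM. -/
def bC (n m : ℕ) : LCNParam n m →L[ℝ] ℝ :=
  EuclideanSpace.proj (Sum.inr (Sum.inr (Sum.inr ())))

/-- Indicator of a nonzero label. -/
def cc {n : ℕ} (y : Fin n → ℝ) (ℓ : Fin n) : ℝ := if y ℓ = 0 then 0 else 1

/-- The local (smooth) model of the network on input `x ℓ`. -/
def gg {n m d J : ℕ} (π : Fin J → Fin m → Fin d) (x : Fin n → EuclideanSpace ℝ (Fin d))
    (y : Fin n → ℝ) (τ : Fin n → Fin J) (ℓ : Fin n) (θ' : LCNParam n m) : ℝ :=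
  bC n m θ' + cc y ℓ / (J : ℝ) * (vC n m ℓ θ' * preC π (x ℓ) ℓ (τ ℓ) θ')

/-- Derivative of `gg`. -/
def Dg {n m d J : ℕ} (π : Fin J → Fin m → Fin d) (x : Fin n → EuclideanSpace ℝ (Fin d))
    (y : Fin n → ℝ) (τ : Fin n → Fin J) (ℓ : Fin n) (θ' : LCNParam n m) :
    LCNParam n m →L[ℝ] ℝ :=
  bC n m + (cc y ℓ / (J : ℝ)) •
    (vC n m ℓ θ' • preC π (x ℓ) ℓ (τ ℓ) + preC π (x ℓ) ℓ (τ ℓ) θ' • vC n m ℓ)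

/-- Second-derivative (bilinear) part of `gg`. -/
def Bmat {n m d J : ℕ} (π : Fin J → Fin m → Fin d) (x : Fin n → EuclideanSpace ℝ (Fin d))
    (y : Fin n → ℝ) (τ : Fin n → Fin J) (ℓ : Fin n) :
    LCNParam n m →L[ℝ] LCNParam n m →L[ℝ] ℝ :=
  (cc y ℓ / (J : ℝ)) •
    ((vC n m ℓ).smulRight (preC π (x ℓ) ℓ (τ ℓ)) +
      (preC π (x ℓ) ℓ (τ ℓ)).smulRight (vC n m ℓ))

lemma Dg_eq {n m d J : ℕ} (π : Fin J → Fin m → Fin d) (x : Fin n → EuclideanSpace ℝ (Fin d))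
    (y : Fin n → ℝ) (τ : Fin n → Fin J) (ℓ : Fin n) (θ' : LCNParam n m) :
    Dg π x y τ ℓ θ' = bC n m + Bmat π x y τ ℓ θ' := by
  simp only [Dg, Bmat, ContinuousLinearMap.smul_apply, ContinuousLinearMap.add_apply,
    ContinuousLinearMap.smulRight_apply]

lemma gg_hasFDerivAt {n m d J : ℕ} (π : Fin J → Fin m → Fin d)
    (x : Fin n → EuclideanSpace ℝ (Fin d)) (y : Fin n → ℝ) (τ : Fin n → Fin J)
    (ℓ : Fin n) (θ' : LCNParam n m) :
    HasFDerivAt (gg π x y τ ℓ) (Dg π x y τ ℓ θ') θ' := by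
  have h1 := ((vC n m ℓ).hasFDerivAt (x := θ')).mul
    ((preC π (x ℓ) ℓ (τ ℓ)).hasFDerivAt (x := θ'))
  have h2 := h1.const_mul (cc y ℓ / (J : ℝ))
  have h3 := ((bC n m).hasFDerivAt (x := θ')).add h2
  exact h3

/-- The local (smooth) model of the loss. -/
def PP {n m d J : ℕ} (π : Fin J → Fin m → Fin d) (x : Fin n → EuclideanSpace ℝ (Fin d))
    (y : Fin n → ℝ) (τ : Fin n → Fin J) (θ' : LCNParam n m) : ℝ :=
  1 / (2 * (n : ℝ)) * ∑ ℓ, (gg π x y τ ℓ θ' - y ℓ) ^ 2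

/-- The derivative of the local model of the loss. -/
def DPmap {n m d J : ℕ} (π : Fin J → Fin m → Fin d) (x : Fin n → EuclideanSpace ℝ (Fin d))
    (y : Fin n → ℝ) (τ : Fin n → Fin J) (θ' : LCNParam n m) : LCNParam n m →L[ℝ] ℝ :=
  (1 / (n : ℝ)) • ∑ ℓ, (gg π x y τ ℓ θ' - y ℓ) • Dg π x y τ ℓ θ'

/-- The Gauss–Newton Hessian. -/
def Hmat {n m d J : ℕ} (π : Fin J → Fin m → Fin d) (x : Fin n → EuclideanSpace ℝ (Fin d))
    (y : Fin n → ℝ) (τ : Fin n → Fin J) (θ : LCNParam n m) :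
    LCNParam n m →L[ℝ] LCNParam n m →L[ℝ] ℝ :=
  (1 / (n : ℝ)) • ∑ ℓ, (Dg π x y τ ℓ θ).smulRight (Dg π x y τ ℓ θ)

lemma PP_hasFDerivAt {n m d J : ℕ} (hn : (n : ℝ) ≠ 0) (π : Fin J → Fin m → Fin d)
    (x : Fin n → EuclideanSpace ℝ (Fin d)) (y : Fin n → ℝ) (τ : Fin n → Fin J)
    (θ' : LCNParam n m) :
    HasFDerivAt (PP π x y τ) (DPmap π x y τ θ') θ' := by
  have h : ∀ ℓ : Fin n, HasFDerivAt (fun θ'' => (gg π x y τ ℓ θ'' - y ℓ) ^ 2)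
      ((gg π x y τ ℓ θ' - y ℓ) • Dg π x y τ ℓ θ' +
        (gg π x y τ ℓ θ' - y ℓ) • Dg π x y τ ℓ θ') θ' := by
    intro ℓ
    have hb := (gg_hasFDerivAt π x y τ ℓ θ').sub_const (y ℓ)
    have := hb.fun_mul hb
    simpa only [← sq] using this
  have hsum := HasFDerivAt.fun_sum (u := Finset.univ) (fun ℓ _ => h ℓ)
  have h2 := hsum.const_mul (1 / (2 * (n : ℝ)))
  have hEq : (1 / (2 * (n : ℝ))) •
      (∑ ℓ : Fin n, ((gg π x y τ ℓ θ' - y ℓ) • Dg π x y τ ℓ θ' +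
        (gg π x y τ ℓ θ' - y ℓ) • Dg π x y τ ℓ θ')) =
      DPmap π x y τ θ' := by
    unfold DPmap
    rw [Finset.smul_sum, Finset.smul_sum]
    refine Finset.sum_congr rfl fun ℓ _ => ?_
    rw [← add_smul, smul_smul, smul_smul]
    congr 1
    field_simp
    ring
  rw [hEq] at h2
  exact h2

lemma DP_hasFDerivAt {n m d J : ℕ} (π : Fin J → Fin m → Fin d)
    (x : Fin n → EuclideanSpace ℝ (Fin d)) (y : Fin n → ℝ) (τ : Fin n → Fin J)
    (θ : LCNParam n m) (hg : ∀ ℓ, gg π x y τ ℓ θ = y ℓ) :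
    HasFDerivAt (DPmap π x y τ) (Hmat π x y τ θ) θ := by
  have h : ∀ ℓ : Fin n, HasFDerivAt (fun θ' => (gg π x y τ ℓ θ' - y ℓ) • Dg π x y τ ℓ θ')
      ((Dg π x y τ ℓ θ).smulRight (Dg π x y τ ℓ θ)) θ := by
    intro ℓ
    have hD : HasFDerivAt (fun θ' => Dg π x y τ ℓ θ') (Bmat π x y τ ℓ) θ := by
      have h0 : HasFDerivAt (fun θ' : LCNParam n m => bC n m + Bmat π x y τ ℓ θ')
          (Bmat π x y τ ℓ) θ := by
        simpa using (hasFDerivAt_const (bC n m) θ).fun_add (Bmat π x y τ ℓ).hasFDerivAt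
      exact h0.congr_of_eventuallyEq
        (Filter.Eventually.of_forall fun θ' => (Dg_eq π x y τ ℓ θ'))
    have hs := ((gg_hasFDerivAt π x y τ ℓ θ).sub_const (y ℓ)).fun_smul hD
    have hz : gg π x y τ ℓ θ - y ℓ = 0 := by rw [hg ℓ]; ring
    simpa [hz] using hs
  have hsum := HasFDerivAt.fun_sum (u := Finset.univ) (fun ℓ _ => h ℓ)
  exact hsum.fun_const_smul (1 / (n : ℝ))

lemma net_eq {n m d J : ℕ} (π : Fin J → Fin m → Fin d)
    (x : Fin n → EuclideanSpace ℝ (Fin d)) (y : Fin n → ℝ) (τ : Fin n → Fin J)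
    (θ' : LCNParam n m)
    (hsig : ∀ k ℓ : Fin n, ∀ j : Fin J,
      if y k ≠ 0 ∧ ℓ = k ∧ j = τ k then 0 < preC π (x ℓ) k j θ'
      else preC π (x ℓ) k j θ' < 0)
    (ℓ : Fin n) : lcnNet π θ' (x ℓ) = gg π x y τ ℓ θ' := by
  have hmax : ∀ k : Fin n, ∀ j : Fin J,
      max ((∑ i : Fin m, θ' (Sum.inl (k, i)) * (x ℓ) (π j i)) - θ' (Sum.inr (Sum.inl k))) 0
        = if y k ≠ 0 ∧ ℓ = k then
            (if j = τ k then preC π (x ℓ) k (τ k) θ' else 0) else 0 := by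
    intro k j
    have h := hsig k ℓ j
    by_cases hc : y k ≠ 0 ∧ ℓ = k ∧ j = τ k
    · rw [if_pos hc] at h
      obtain ⟨h1, h2, h3⟩ := hc
      subst h3
      rw [if_pos ⟨h1, h2⟩, if_pos rfl, ← preC_apply]
      exact max_eq_left h.le
    · rw [if_neg hc] at h
      have h0 : max ((∑ i : Fin m, θ' (Sum.inl (k, i)) * (x ℓ) (π j i)) -
          θ' (Sum.inr (Sum.inl k))) 0 = 0 := by
        rw [← preC_apply π (x ℓ) k j θ']
        exact max_eq_right h.le
      rw [h0]
      by_cases h1 : y k ≠ 0 ∧ ℓ = k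
      · by_cases h2 : j = τ k
        · exact absurd ⟨h1.1, h1.2, h2⟩ hc
        · rw [if_pos h1, if_neg h2]
      · rw [if_neg h1]
  have hstep1 : lcnNet π θ' (x ℓ) =
      (∑ k : Fin n, θ' (Sum.inr (Sum.inr (Sum.inl k))) / (J : ℝ) *
        (if y k ≠ 0 ∧ ℓ = k then preC π (x ℓ) k (τ k) θ' else 0)) +
      θ' (Sum.inr (Sum.inr (Sum.inr ()))) := by
    unfold lcnNet
    congr 1
    refine Finset.sum_congr rfl fun k _ => ?_
    congr 1
    rw [show (∑ j : Fin J, max ((∑ i : Fin m, θ' (Sum.inl (k, i)) * (x ℓ) (π j i)) -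
        θ' (Sum.inr (Sum.inl k))) 0) = ∑ j : Fin J,
          (if y k ≠ 0 ∧ ℓ = k then (if j = τ k then preC π (x ℓ) k (τ k) θ' else 0) else 0)
      from Finset.sum_congr rfl fun j _ => hmax k j]
    by_cases h1 : y k ≠ 0 ∧ ℓ = k
    · simp [h1]
    · simp [h1]
  rw [hstep1, Finset.sum_eq_single ℓ]
  · unfold gg bC vC cc
    by_cases h0 : y ℓ = 0
    · simp [h0]
    · have : y ℓ ≠ 0 ∧ ℓ = ℓ := ⟨h0, rfl⟩
      rw [if_pos this]
      simp only [h0, if_neg h0, if_false]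
      simp only [EuclideanSpace.proj, PiLp.proj_apply]
      ring
  · intro k _ hk
    rw [if_neg (fun hcon => hk hcon.2.symm), mul_zero]
  · intro h
    exact absurd (Finset.mem_univ ℓ) h

/-- Two-term Cauchy–Schwarz. -/
lemma cs2 {p q a b c d : ℝ} (ha : 0 ≤ a) (hb : 0 ≤ b) (hc : 0 ≤ c) (hd : 0 ≤ d)
    (hp : p ^ 2 ≤ a * c) (hq : q ^ 2 ≤ b * d) : (p + q) ^ 2 ≤ (a + b) * (c + d) := by
  have h1 : (p * q) ^ 2 ≤ (a * c) * (b * d) := by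
    calc (p * q) ^ 2 = p ^ 2 * q ^ 2 := by ring
    _ ≤ (a * c) * (b * d) := by
        apply mul_le_mul hp hq (sq_nonneg q)
        exact mul_nonneg ha hc
  have hu : 0 ≤ a * d := mul_nonneg ha hd
  have hw : 0 ≤ b * c := mul_nonneg hb hc
  have h2 : 2 * (p * q) ≤ a * d + b * c := by
    rcases le_or_gt (2 * (p * q)) 0 with h | h
    · linarith
    · have h4 : (2 * (p * q)) ^ 2 ≤ (a * d + b * c) ^ 2 := by
        nlinarith [sq_nonneg (a * d - b * c), h1]
      nlinarith [h4, hu, hw, h]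
  nlinarith [hp, hq, h2]

/-- Per-sample bound for the Gauss–Newton quadratic form. -/
lemma stepA {Jr v S W wb wv yv D : ℝ} (hJr : 0 < Jr) (hv2 : v ^ 2 = 1)
    (hSW : S ^ 2 ≤ W) (hW : 0 ≤ W) (hyD : |yv| ≤ D) :
    (v * (S - wb) / Jr + |yv| * wv) ^ 2 ≤ (D ^ 2 + 2 / Jr ^ 2) * (W + wb ^ 2 + wv ^ 2) := by
  have hy2 : yv ^ 2 ≤ D ^ 2 := by nlinarith [sq_abs yv, abs_nonneg yv]
  have hp : (v * (S - wb) / Jr) ^ 2 ≤ (2 / Jr ^ 2) * (W + wb ^ 2) := by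
    have h1 : (v * (S - wb) / Jr) ^ 2 = (S - wb) ^ 2 / Jr ^ 2 := by
      rw [div_pow, mul_pow, hv2, one_mul]
    rw [h1, div_le_iff₀ (pow_pos hJr 2)]
    calc (S - wb) ^ 2 ≤ 2 * (W + wb ^ 2) := by nlinarith [sq_nonneg (S + wb)]
      _ = 2 / Jr ^ 2 * (W + wb ^ 2) * Jr ^ 2 := by field_simp
  have hq : (|yv| * wv) ^ 2 ≤ D ^ 2 * wv ^ 2 := by
    rw [mul_pow, sq_abs]
    exact mul_le_mul_of_nonneg_right hy2 (sq_nonneg wv)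
  have h2Jr : (0:ℝ) ≤ 2 / Jr ^ 2 := le_of_lt (div_pos two_pos (pow_pos hJr 2))
  have hcs := cs2 h2Jr (sq_nonneg D) (add_nonneg hW (sq_nonneg wb)) (sq_nonneg wv) hp hq
  calc (v * (S - wb) / Jr + |yv| * wv) ^ 2
      ≤ (2 / Jr ^ 2 + D ^ 2) * ((W + wb ^ 2) + wv ^ 2) := hcs
    _ = (D ^ 2 + 2 / Jr ^ 2) * (W + wb ^ 2 + wv ^ 2) := by ring

/-- Summation of the per-sample bounds (Young's inequality trick). -/
lemma stepC {n : ℕ} (hn : 0 < (n : ℝ)) {C β : ℝ} (hC : 0 < C) (t r : Fin n → ℝ)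
    (hA : ∀ ℓ, (t ℓ - β) ^ 2 ≤ C * r ℓ) (hB : β ^ 2 + ∑ ℓ, r ℓ = 1) :
    (1 / (n : ℝ)) * ∑ ℓ, (t ℓ) ^ 2 ≤ 1 + C / (n : ℝ) := by
  have hyoung : ∀ ℓ : Fin n, (n : ℝ) * C * (t ℓ) ^ 2 ≤
      ((n : ℝ) * C + C ^ 2) * β ^ 2 + ((n : ℝ) * C + (n : ℝ) ^ 2) * (t ℓ - β) ^ 2 := by
    intro ℓ
    nlinarith [sq_nonneg (C * β - (n : ℝ) * (t ℓ - β))]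
  have hsumA : ∑ ℓ, (t ℓ - β) ^ 2 ≤ C * ∑ ℓ, r ℓ := by
    rw [Finset.mul_sum]
    exact Finset.sum_le_sum fun ℓ _ => hA ℓ
  have hsum1 : (n : ℝ) * C * (∑ ℓ, (t ℓ) ^ 2) ≤ (n : ℝ) * C * ((n : ℝ) + C) := by
    rw [Finset.mul_sum]
    calc ∑ ℓ, (n : ℝ) * C * (t ℓ) ^ 2
        ≤ ∑ ℓ, (((n : ℝ) * C + C ^ 2) * β ^ 2 + ((n : ℝ) * C + (n : ℝ) ^ 2) * (t ℓ - β) ^ 2) :=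
          Finset.sum_le_sum fun ℓ _ => hyoung ℓ
      _ = (n : ℝ) * (((n : ℝ) * C + C ^ 2) * β ^ 2) +
          ((n : ℝ) * C + (n : ℝ) ^ 2) * ∑ ℓ, (t ℓ - β) ^ 2 := by
          rw [Finset.sum_add_distrib, Finset.sum_const, Finset.card_univ, Fintype.card_fin,
            ← Finset.mul_sum]
          push_cast
          ring
      _ ≤ (n : ℝ) * (((n : ℝ) * C + C ^ 2) * β ^ 2) +
          ((n : ℝ) * C + (n : ℝ) ^ 2) * (C * ∑ ℓ, r ℓ) := by
          have hco : 0 ≤ (n : ℝ) * C + (n : ℝ) ^ 2 := by positivity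
          nlinarith [mul_le_mul_of_nonneg_left hsumA hco]
      _ ≤ (n : ℝ) * C * ((n : ℝ) + C) := by
          have hrsum : ∑ ℓ, r ℓ = 1 - β ^ 2 := by linarith [hB]
          rw [hrsum]
          nlinarith [sq_nonneg β, hn, hC]
  have hsum2 : ∑ ℓ, (t ℓ) ^ 2 ≤ (n : ℝ) + C := by
    have hpos : 0 < (n : ℝ) * C := mul_pos hn hC
    exact le_of_mul_le_mul_left hsum1 hpos
  calc (1 / (n : ℝ)) * ∑ ℓ, (t ℓ) ^ 2 ≤ (1 / (n : ℝ)) * ((n : ℝ) + C) :=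
        mul_le_mul_of_nonneg_left hsum2 (by positivity)
    _ = 1 + C / (n : ℝ) := by field_simp

end

end Stmt18Aux

set_option maxHeartbeats 1000000 in
/-- Flat interpolation: at the constructed interpolating parameter (one neuron
per nonzero-label example, each active on exactly one patch, unit output
weights, pre-activation `J|y_k|` at the unit-norm anchor patch), the loss
Hessian equals its Gauss–Newton part and
`λ_max(∇²L) ≤ 1 + (D² + 2/J²)/n`, both stated via quadratic forms over unit
vectors. -/
theorem stmt_18 (n m d J : ℕ) (hn : 0 < n) (hJ : 0 < J)
    (π : Fin J → Fin m → Fin d)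
    (x : Fin n → EuclideanSpace ℝ (Fin d)) (y : Fin n → ℝ)
    (D : ℝ) (hy : ∀ i, |y i| ≤ D)
    (θ : LCNParam n m)
    -- unit output weights after the 1-homogeneity reparameterization
    (hv : ∀ k : Fin n, |θ (Sum.inr (Sum.inr (Sum.inl k)))| = 1)
    -- neuron k is active exactly on the anchor patch (k, τ k) of a
    -- nonzero-label example
    (τ : Fin n → Fin J)
    (hact : ∀ k ℓ : Fin n, ∀ j : Fin J,
      ((∑ i : Fin m, θ (Sum.inl (k, i)) * x ℓ (π j i)) >
          θ (Sum.inr (Sum.inl k)))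
        ↔ (y k ≠ 0 ∧ ℓ = k ∧ j = τ k))
    -- no patch sits exactly on an activation boundary
    (hstrict : ∀ k ℓ : Fin n, ∀ j : Fin J,
      (∑ i : Fin m, θ (Sum.inl (k, i)) * x ℓ (π j i)) ≠
        θ (Sum.inr (Sum.inl k)))
    -- pre-activation `z_k = J * |y_k|` at the anchor patch
    (hpre : ∀ k : Fin n, y k ≠ 0 →
      (∑ i : Fin m, θ (Sum.inl (k, i)) * x k (π (τ k) i)) -
          θ (Sum.inr (Sum.inl k)) = (J : ℝ) * |y k|)
    -- anchor patches have unit norm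
    (hanchor : ∀ k : Fin n, y k ≠ 0 → ∑ i : Fin m, (x k (π (τ k) i)) ^ 2 = 1)
    -- θ interpolates the data
    (hinterp : ∀ ℓ : Fin n, lcnNet π θ (x ℓ) = y ℓ)
    (L : LCNParam n m → ℝ)
    (hL : L = fun θ' => (1 / (2 * (n : ℝ))) * ∑ i, (lcnNet π θ' (x i) - y i) ^ 2) :
    ∀ ω : LCNParam n m, ‖ω‖ = 1 →
      iteratedFDeriv ℝ 2 L θ ![ω, ω] =
        (1 / (n : ℝ)) *
          ∑ i, ⟪gradient (fun θ' => lcnNet π θ' (x i)) θ, ω⟫ ^ 2 ∧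
      iteratedFDeriv ℝ 2 L θ ![ω, ω] ≤
        1 + (D ^ 2 + 2 / (J : ℝ) ^ 2) / (n : ℝ) := by
  intro ω hω
  have hn' : (0 : ℝ) < n := by exact_mod_cast hn
  have hJ' : (0 : ℝ) < J := by exact_mod_cast hJ
  have hn0 : (n : ℝ) ≠ 0 := ne_of_gt hn'
  have hJ0 : (J : ℝ) ≠ 0 := ne_of_gt hJ'
  open Stmt18Aux in
  -- eventual sign pattern
  have hsig : ∀ᶠ θ' in nhds θ, ∀ k ℓ : Fin n, ∀ j : Fin J,
      if y k ≠ 0 ∧ ℓ = k ∧ j = τ k then 0 < Stmt18Aux.preC π (x ℓ) k j θ'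
      else Stmt18Aux.preC π (x ℓ) k j θ' < 0 := by
    rw [Filter.eventually_all]; intro k
    rw [Filter.eventually_all]; intro ℓ
    rw [Filter.eventually_all]; intro j
    by_cases h : y k ≠ 0 ∧ ℓ = k ∧ j = τ k
    · simp only [if_pos h]
      have h0 : 0 < Stmt18Aux.preC π (x ℓ) k j θ := by
        rw [Stmt18Aux.preC_apply]
        have := (hact k ℓ j).2 h
        linarith
      exact ((Stmt18Aux.preC π (x ℓ) k j).continuous.continuousAt).eventually
        (eventually_gt_nhds h0)
    · simp only [if_neg h]
      have h0 : Stmt18Aux.preC π (x ℓ) k j θ < 0 := by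
        rw [Stmt18Aux.preC_apply]
        rcases lt_or_gt_of_ne (hstrict k ℓ j) with hlt | hgt
        · linarith
        · exact absurd ((hact k ℓ j).1 hgt) h
      exact ((Stmt18Aux.preC π (x ℓ) k j).continuous.continuousAt).eventually
        (eventually_lt_nhds h0)
  have hnet : ∀ᶠ θ' in nhds θ, ∀ ℓ, lcnNet π θ' (x ℓ) = Stmt18Aux.gg π x y τ ℓ θ' :=
    hsig.mono fun θ' h ℓ => Stmt18Aux.net_eq π x y τ θ' h ℓ
  have hggθ : ∀ ℓ, Stmt18Aux.gg π x y τ ℓ θ = y ℓ := by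
    intro ℓ
    rw [← hinterp ℓ]
    exact (hnet.self_of_nhds ℓ).symm
  have hLP : ∀ᶠ θ' in nhds θ, L θ' = Stmt18Aux.PP π x y τ θ' := by
    refine hnet.mono fun θ' h => ?_
    rw [hL]
    unfold Stmt18Aux.PP
    simp only
    exact congrArg _ (Finset.sum_congr rfl fun ℓ _ => by rw [h ℓ])
  have hfd1 : fderiv ℝ L =ᶠ[nhds θ] Stmt18Aux.DPmap π x y τ := by
    refine hLP.eventually_nhds.mono fun θ' h => ?_
    exact (Filter.EventuallyEq.fderiv_eq h).trans (Stmt18Aux.PP_hasFDerivAt hn0 π x y τ θ').fderiv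
  have hfd2 : fderiv ℝ (fderiv ℝ L) θ = Stmt18Aux.Hmat π x y τ θ := by
    rw [hfd1.fderiv_eq]
    exact (Stmt18Aux.DP_hasFDerivAt π x y τ θ hggθ).fderiv
  have hiter : iteratedFDeriv ℝ 2 L θ ![ω, ω] = Stmt18Aux.Hmat π x y τ θ ω ω := by
    rw [iteratedFDeriv_two_apply, hfd2]
    simp
  have hHval : Stmt18Aux.Hmat π x y τ θ ω ω =
      (1 / (n : ℝ)) * ∑ ℓ, (Stmt18Aux.Dg π x y τ ℓ θ ω) ^ 2 := by
    unfold Stmt18Aux.Hmat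
    simp only [ContinuousLinearMap.smul_apply, ContinuousLinearMap.coe_sum',
      Finset.sum_apply, ContinuousLinearMap.smulRight_apply, ContinuousLinearMap.coe_smul',
      Pi.smul_apply, smul_eq_mul]
    simp only [pow_two, Finset.mul_sum]
  have hgrad : ∀ i, (⟪gradient (fun θ' => lcnNet π θ' (x i)) θ, ω⟫ : ℝ)
      = Stmt18Aux.Dg π x y τ i θ ω := by
    intro i
    have hf : HasFDerivAt (fun θ' => lcnNet π θ' (x i)) (Stmt18Aux.Dg π x y τ i θ) θ :=
      (Stmt18Aux.gg_hasFDerivAt π x y τ i θ).congr_of_eventuallyEq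
        (hnet.mono fun θ' h => h i)
    rw [hf.hasGradientAt.gradient]
    exact InnerProductSpace.toDual_symm_apply
  constructor
  · rw [hiter, hHval]
    exact congrArg _ (Finset.sum_congr rfl fun i _ => by rw [hgrad i])
  · rw [hiter, hHval]
    have h2J : 0 < 2 / (J : ℝ) ^ 2 := div_pos two_pos (pow_pos hJ' 2)
    have hC0 : 0 < D ^ 2 + 2 / (J : ℝ) ^ 2 := by nlinarith [sq_nonneg D]
    have hDgval : ∀ ℓ, Stmt18Aux.Dg π x y τ ℓ θ ω =
        ω (Sum.inr (Sum.inr (Sum.inr ()))) + Stmt18Aux.cc y ℓ / (J : ℝ) *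
          (θ (Sum.inr (Sum.inr (Sum.inl ℓ))) * Stmt18Aux.preC π (x ℓ) ℓ (τ ℓ) ω +
            Stmt18Aux.preC π (x ℓ) ℓ (τ ℓ) θ * ω (Sum.inr (Sum.inr (Sum.inl ℓ)))) := by
      intro ℓ
      unfold Stmt18Aux.Dg Stmt18Aux.vC Stmt18Aux.bC
      simp only [ContinuousLinearMap.add_apply, ContinuousLinearMap.smul_apply, smul_eq_mul,
        EuclideanSpace.proj, PiLp.proj_apply]
    -- Step A : per-sample bound
    have hA : ∀ ℓ, (Stmt18Aux.Dg π x y τ ℓ θ ω - ω (Sum.inr (Sum.inr (Sum.inr ())))) ^ 2 ≤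
        (D ^ 2 + 2 / (J : ℝ) ^ 2) * ((∑ i : Fin m, ω (Sum.inl (ℓ, i)) ^ 2) +
          ω (Sum.inr (Sum.inl ℓ)) ^ 2 + ω (Sum.inr (Sum.inr (Sum.inl ℓ))) ^ 2) := by
      intro ℓ
      by_cases hy0 : y ℓ = 0
      · have h0 : Stmt18Aux.Dg π x y τ ℓ θ ω - ω (Sum.inr (Sum.inr (Sum.inr ()))) = 0 := by
          rw [hDgval ℓ]
          simp [Stmt18Aux.cc, hy0]
        rw [h0]
        have hrℓ : 0 ≤ (∑ i : Fin m, ω (Sum.inl (ℓ, i)) ^ 2) +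
            ω (Sum.inr (Sum.inl ℓ)) ^ 2 + ω (Sum.inr (Sum.inr (Sum.inl ℓ))) ^ 2 := by
          have h1 : 0 ≤ ∑ i : Fin m, ω (Sum.inl (ℓ, i)) ^ 2 :=
            Finset.sum_nonneg fun i _ => sq_nonneg _
          nlinarith [sq_nonneg (ω (Sum.inr (Sum.inl ℓ))),
            sq_nonneg (ω (Sum.inr (Sum.inr (Sum.inl ℓ))))]
        simpa using mul_nonneg hC0.le hrℓ
      · have hAω : Stmt18Aux.preC π (x ℓ) ℓ (τ ℓ) ω =
            (∑ i : Fin m, ω (Sum.inl (ℓ, i)) * x ℓ (π (τ ℓ) i)) - ω (Sum.inr (Sum.inl ℓ)) :=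
          Stmt18Aux.preC_apply π (x ℓ) ℓ (τ ℓ) ω
        have hAθ : Stmt18Aux.preC π (x ℓ) ℓ (τ ℓ) θ = (J : ℝ) * |y ℓ| := by
          rw [Stmt18Aux.preC_apply]
          exact hpre ℓ hy0
        have hSW : (∑ i : Fin m, ω (Sum.inl (ℓ, i)) * x ℓ (π (τ ℓ) i)) ^ 2 ≤
            ∑ i : Fin m, ω (Sum.inl (ℓ, i)) ^ 2 := by
          have h1 := Finset.sum_mul_sq_le_sq_mul_sq Finset.univ
            (fun i : Fin m => ω (Sum.inl (ℓ, i))) (fun i => x ℓ (π (τ ℓ) i))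
          rwa [hanchor ℓ hy0, mul_one] at h1
        have hW0 : 0 ≤ ∑ i : Fin m, ω (Sum.inl (ℓ, i)) ^ 2 :=
          Finset.sum_nonneg fun i _ => sq_nonneg _
        have hv2 : θ (Sum.inr (Sum.inr (Sum.inl ℓ))) ^ 2 = 1 := by
          rw [← sq_abs, hv ℓ, one_pow]
        have hstep := Stmt18Aux.stepA (wb := ω (Sum.inr (Sum.inl ℓ)))
          (wv := ω (Sum.inr (Sum.inr (Sum.inl ℓ)))) hJ' hv2 hSW hW0 (hy ℓ)
        calc (Stmt18Aux.Dg π x y τ ℓ θ ω - ω (Sum.inr (Sum.inr (Sum.inr ())))) ^ 2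
            = (θ (Sum.inr (Sum.inr (Sum.inl ℓ))) *
                ((∑ i : Fin m, ω (Sum.inl (ℓ, i)) * x ℓ (π (τ ℓ) i)) -
                  ω (Sum.inr (Sum.inl ℓ))) / (J : ℝ) +
                |y ℓ| * ω (Sum.inr (Sum.inr (Sum.inl ℓ)))) ^ 2 := by
              rw [hDgval ℓ, hAω, hAθ]
              simp only [Stmt18Aux.cc, if_neg hy0]
              field_simp
              ring
          _ ≤ (D ^ 2 + 2 / (J : ℝ) ^ 2) * ((∑ i : Fin m, ω (Sum.inl (ℓ, i)) ^ 2) +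
                ω (Sum.inr (Sum.inl ℓ)) ^ 2 + ω (Sum.inr (Sum.inr (Sum.inl ℓ))) ^ 2) := hstep
    -- Step B : the coordinates of ω sum to one
    have hB : ω (Sum.inr (Sum.inr (Sum.inr ()))) ^ 2 +
        ∑ ℓ, ((∑ i : Fin m, ω (Sum.inl (ℓ, i)) ^ 2) + ω (Sum.inr (Sum.inl ℓ)) ^ 2 +
          ω (Sum.inr (Sum.inr (Sum.inl ℓ))) ^ 2) = 1 := by
      have h1 : ∑ i, ω i ^ 2 = 1 := by
        have h2 := hω
        rw [EuclideanSpace.norm_eq] at h2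
        have h3 : ∑ i, ‖ω i‖ ^ 2 = 1 := by
          rw [← Real.sqrt_eq_one]
          exact h2
        calc ∑ i, ω i ^ 2 = ∑ i, ‖ω i‖ ^ 2 :=
              Finset.sum_congr rfl fun i _ => by rw [Real.norm_eq_abs, sq_abs]
          _ = 1 := h3
      rw [Fintype.sum_sum_type, Fintype.sum_sum_type, Fintype.sum_sum_type,
        Fintype.sum_prod_type] at h1
      simp only [Finset.univ_unique, Finset.sum_singleton] at h1
      rw [Finset.sum_add_distrib, Finset.sum_add_distrib]
      linarith [h1]
    have := Stmt18Aux.stepC hn' hC0 (fun ℓ => Stmt18Aux.Dg π x y τ ℓ θ ω)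
      (fun ℓ => (∑ i : Fin m, ω (Sum.inl (ℓ, i)) ^ 2) + ω (Sum.inr (Sum.inl ℓ)) ^ 2 +
        ω (Sum.inr (Sum.inr (Sum.inl ℓ))) ^ 2) hA hB
    exact this
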